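/- Let A : ℝ^d → ℝ^{m×n} be a matrix-valued function that is continuous at x₀ ∈ ℝ^d, and let A⁺ : ℝ^d → ℝ^{n×m} assign to each x the Moore–Penrose pseudoinverse of A(x). Then A⁺ is continuous at x₀ if and only if there is a neighborhood of x₀ on which rank(A(x)) = rank(A(x₀)). -/

import Mathlib

set_option maxHeartbeats 2000000

open Matrix Filter

attribute [local instance] Matrix.normedAddCommGroup Matrix.normedSpace

section Aux

/-- trace of an idempotent real matrix equals its rank -/
theorem aux_trace_eq_rank_of_idem {k : ℕ} (M : Matrix (Fin k) (Fin k) ℝ) (h : M * M = M) :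
    M.trace = (M.rank : ℝ) := by
  have hproj : LinearMap.IsProj (LinearMap.range M.mulVecLin) M.mulVecLin := by
    constructor
    · intro x; exact LinearMap.mem_range_self _ x
    · rintro x ⟨y, rfl⟩
      have := congrArg Matrix.mulVecLin h
      rw [Matrix.mulVecLin_mul] at this
      exact congrFun (congrArg DFunLike.coe this) y
  have ht := hproj.trace
  rw [Matrix.rank, ← ht,
    LinearMap.trace_eq_matrix_trace ℝ (Pi.basisFun ℝ (Fin k))]
  congr 1
  rw [LinearMap.toMatrix_eq_toMatrix', ← Matrix.toLin'_apply']
  simp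

theorem aux_sym_sq_zero {m n : ℕ} (S : Matrix (Fin m) (Fin n) ℝ) (h : Sᵀ * S = 0) : S = 0 := by
  have : Sᴴ * S = 0 := by rwa [Matrix.conjTranspose_eq_transpose_of_trivial]
  exact Matrix.conjTranspose_mul_self_eq_zero.mp this

theorem aux_pinv_unique {m n : ℕ} (A : Matrix (Fin m) (Fin n) ℝ) (P Q : Matrix (Fin n) (Fin m) ℝ)
    (hP1 : A*P*A = A) (hP2 : P*A*P = P) (hP3 : (A*P)ᵀ = A*P) (hP4 : (P*A)ᵀ = P*A)
    (hQ1 : A*Q*A = A) (hQ2 : Q*A*Q = Q) (hQ3 : (A*Q)ᵀ = A*Q) (hQ4 : (Q*A)ᵀ = Q*A) :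
    P = Q := by
  have hAP : A*P = A*Q := by
    calc A*P = (A*Q*A)*P := by rw [hQ1]
    _ = (A*Q)*(A*P) := by rw [Matrix.mul_assoc (A*Q) A P]
    _ = (A*Q)ᵀ*(A*P)ᵀ := by rw [hQ3, hP3]
    _ = Qᵀ*(A*P*A)ᵀ := by simp only [Matrix.transpose_mul, Matrix.mul_assoc]
    _ = Qᵀ*Aᵀ := by rw [hP1]
    _ = (A*Q)ᵀ := by rw [Matrix.transpose_mul]
    _ = A*Q := hQ3
  have hPA : P*A = Q*A := by
    calc P*A = P*(A*Q*A) := by rw [hQ1]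
    _ = (P*A)*(Q*A) := by simp only [Matrix.mul_assoc]
    _ = (P*A)ᵀ*(Q*A)ᵀ := by rw [hP4, hQ4]
    _ = (A*(P*A))ᵀ*Qᵀ := by simp only [Matrix.transpose_mul, Matrix.mul_assoc]
    _ = Aᵀ*Qᵀ := by rw [← Matrix.mul_assoc, hP1]
    _ = (Q*A)ᵀ := by rw [Matrix.transpose_mul]
    _ = Q*A := hQ4
  calc P = P*A*P := hP2.symm
  _ = (Q*A)*P := by rw [hPA]
  _ = Q*(A*P) := by rw [Matrix.mul_assoc]
  _ = Q*(A*Q) := by rw [hAP]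
  _ = Q*A*Q := by rw [Matrix.mul_assoc]
  _ = Q := hQ2

/-- entries of a symmetric idempotent are bounded by 1 -/
theorem aux_entry_bound {k : ℕ} (M : Matrix (Fin k) (Fin k) ℝ) (hs : Mᵀ = M) (hi : M * M = M)
    (i j : Fin k) : |M i j| ≤ 1 := by
  have hMM : M = Mᵀ * M := by rw [hs, hi]
  have hdiag : ∀ j, M j j = ∑ i, (M i j)^2 := by
    intro j
    conv_lhs => rw [hMM]
    simp [Matrix.mul_apply, Matrix.transpose_apply, sq]
  have hd_le : ∀ j, M j j ≤ 1 := by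
    intro j
    by_contra hgt
    push_neg at hgt
    have h1 : (M j j)^2 ≤ ∑ i, (M i j)^2 :=
      Finset.single_le_sum (fun i _ => sq_nonneg (M i j)) (Finset.mem_univ j)
    rw [← hdiag j] at h1
    nlinarith
  have h2 : (M i j)^2 ≤ M j j := by
    have := Finset.single_le_sum (f := fun i => (M i j)^2)
      (fun i _ => sq_nonneg (M i j)) (Finset.mem_univ i)
    rw [← hdiag j] at this
    exact this
  nlinarith [hd_le j, abs_nonneg (M i j), sq_abs (M i j)]

theorem aux_tendsto_matmul {X : Type*} {l : Filter X} {a b c : ℕ}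
    {f : X → Matrix (Fin a) (Fin b) ℝ} {g : X → Matrix (Fin b) (Fin c) ℝ}
    {M : Matrix (Fin a) (Fin b) ℝ} {N : Matrix (Fin b) (Fin c) ℝ}
    (hf : Tendsto f l (nhds M)) (hg : Tendsto g l (nhds N)) :
    Tendsto (fun x => f x * g x) l (nhds (M * N)) := by
  have hc : Continuous (fun p : Matrix (Fin a) (Fin b) ℝ × Matrix (Fin b) (Fin c) ℝ =>
      p.1 * p.2) := Continuous.matrix_mul continuous_fst continuous_snd
  exact (hc.tendsto (M, N)).comp (hf.prodMk_nhds hg)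

theorem aux_tendsto_transpose {X : Type*} {l : Filter X} {a b : ℕ}
    {f : X → Matrix (Fin a) (Fin b) ℝ} {M : Matrix (Fin a) (Fin b) ℝ}
    (hf : Tendsto f l (nhds M)) :
    Tendsto (fun x => (f x)ᵀ) l (nhds Mᵀ) :=
  ((Continuous.matrix_transpose continuous_id).tendsto M).comp hf

theorem aux_tendsto_trace {X : Type*} {l : Filter X} {a : ℕ}
    {f : X → Matrix (Fin a) (Fin a) ℝ} {M : Matrix (Fin a) (Fin a) ℝ}
    (hf : Tendsto f l (nhds M)) :
    Tendsto (fun x => (f x).trace) l (nhds M.trace) :=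
  ((Continuous.matrix_trace continuous_id).tendsto M).comp hf

/-- rank of P*A equals rank of A when A*P*A = A -/
theorem aux_rank_PA {m n : ℕ} (A : Matrix (Fin m) (Fin n) ℝ) (P : Matrix (Fin n) (Fin m) ℝ)
    (h1 : A * P * A = A) : (P * A).rank = A.rank := by
  refine le_antisymm (Matrix.rank_mul_le_right _ _) ?_
  conv_lhs => rw [← h1, Matrix.mul_assoc]
  exact Matrix.rank_mul_le_right _ _

theorem aux_rank_AP {m n : ℕ} (A : Matrix (Fin m) (Fin n) ℝ) (P : Matrix (Fin n) (Fin m) ℝ)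
    (h1 : A * P * A = A) : (A * P).rank = A.rank := by
  refine le_antisymm (Matrix.rank_mul_le_left _ _) ?_
  conv_lhs => rw [← h1]
  exact Matrix.rank_mul_le_left _ _

end Aux

/-- Continuity of the Moore–Penrose pseudoinverse: if `A : ℝ^d → ℝ^{m×n}` is continuous
at `x₀` and `P x` is the Moore–Penrose pseudoinverse of `A x` for each `x`, then `P` is
continuous at `x₀` iff the rank of `A` is constant in a neighborhood of `x₀`. -/
theorem pseudoinverse_continuousAt_iff_rank_locally_constant
    {d m n : ℕ}
    (A : (Fin d → ℝ) → Matrix (Fin m) (Fin n) ℝ)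
    (P : (Fin d → ℝ) → Matrix (Fin n) (Fin m) ℝ)
    (hP : ∀ x, A x * P x * A x = A x ∧ P x * A x * P x = P x ∧
      (A x * P x)ᵀ = A x * P x ∧ (P x * A x)ᵀ = P x * A x)
    (x₀ : Fin d → ℝ) (hA : ContinuousAt A x₀) :
    ContinuousAt P x₀ ↔ ∀ᶠ x in nhds x₀, (A x).rank = (A x₀).rank := by
  constructor
  · -- forward direction
    intro hPc
    have hrk : ∀ x, ((A x * P x).trace) = ((A x).rank : ℝ) := by
      intro x
      obtain ⟨h1, h2, h3, h4⟩ := hP x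
      have hidem : (A x * P x) * (A x * P x) = A x * P x := by
        calc (A x * P x) * (A x * P x) = (A x * P x * A x) * P x := by
              simp only [Matrix.mul_assoc]
        _ = A x * P x := by rw [h1]
      rw [aux_trace_eq_rank_of_idem _ hidem, aux_rank_AP _ _ h1]
    have hcont : ContinuousAt (fun x => ((A x).rank : ℝ)) x₀ := by
      have h : ContinuousAt (fun x => (A x * P x).trace) x₀ :=
        aux_tendsto_trace (aux_tendsto_matmul hA hPc)
      simpa only [hrk] using h
    have hev := hcont.tendsto (Metric.ball_mem_nhds _ (by norm_num : (0:ℝ) < 1))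
    filter_upwards [hev] with x hx
    simp only [Set.mem_preimage, Metric.mem_ball, Real.dist_eq] at hx
    have h1 : ((A x).rank : ℝ) < (A x₀).rank + 1 := by linarith [abs_lt.mp hx]
    have h2 : ((A x₀).rank : ℝ) < (A x).rank + 1 := by linarith [abs_lt.mp hx]
    have h1' : (A x).rank < (A x₀).rank + 1 := by exact_mod_cast h1
    have h2' : (A x₀).rank < (A x).rank + 1 := by exact_mod_cast h2
    omega
  · -- reverse direction
    intro hr
    -- Step 1: boundedness of P near x₀
    have hbdd : ∃ C : ℝ, ∀ᶠ x in nhds x₀, ‖P x‖ ≤ C := by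
      by_contra hnb
      push_neg at hnb
      have hfreq : ∀ C : ℝ, ∃ᶠ x in nhds x₀, C < ‖P x‖ := by
        intro C
        have h := Filter.not_eventually.mp (hnb C)
        exact h.mono (fun x hx => not_not.mp hx)
      have hexists : ∀ k : ℕ, ∃ x, dist x x₀ < 1/(k+1) ∧ (A x).rank = (A x₀).rank ∧
          (k+1 : ℝ) < ‖P x‖ := by
        intro k
        have hpos : (0:ℝ) < 1/(k+1) := by positivity
        have h1 : ∀ᶠ x in nhds x₀, dist x x₀ < 1/(k+1) ∧ (A x).rank = (A x₀).rank :=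
          (Filter.eventually_of_mem (Metric.ball_mem_nhds x₀ hpos)
            (fun x hx => by rwa [Metric.mem_ball] at hx)).and hr
        obtain ⟨x, hx1, hx2, hx3⟩ := ((hfreq (k+1)).and_eventually h1).exists
        exact ⟨x, hx2, hx3, hx1⟩
      choose xs hdist hrank hnorm using hexists
      have hxs : Tendsto xs atTop (nhds x₀) := by
        rw [tendsto_iff_dist_tendsto_zero]
        refine squeeze_zero (fun k => dist_nonneg) (fun k => (hdist k).le) ?_
        exact tendsto_one_div_add_atTop_nhds_zero_nat
      have hAseq : Tendsto (fun k => A (xs k)) atTop (nhds (A x₀)) := Filter.Tendsto.comp hA hxs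
      set c : ℕ → ℝ := fun k => ‖P (xs k)‖ with hc_def
      have hc_pos : ∀ k, (0:ℝ) < c k := fun k =>
        lt_of_le_of_lt (by positivity) (hnorm k)
      set Q : ℕ → Matrix (Fin n) (Fin m) ℝ := fun k => (c k)⁻¹ • P (xs k) with hQ_def
      set Pi' : ℕ → Matrix (Fin n) (Fin n) ℝ := fun k => P (xs k) * A (xs k) with hPi_def
      have hPisym : ∀ k, (Pi' k)ᵀ = Pi' k := fun k => (hP (xs k)).2.2.2
      have hPiidem : ∀ k, Pi' k * Pi' k = Pi' k := by
        intro k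
        show (P (xs k) * A (xs k)) * (P (xs k) * A (xs k)) = P (xs k) * A (xs k)
        calc (P (xs k) * A (xs k)) * (P (xs k) * A (xs k))
            = (P (xs k) * A (xs k) * P (xs k)) * A (xs k) := by simp only [Matrix.mul_assoc]
        _ = P (xs k) * A (xs k) := by rw [(hP (xs k)).2.1]
      have hPiball : ∀ k, Pi' k ∈ Metric.closedBall (0 : Matrix (Fin n) (Fin n) ℝ) 1 := by
        intro k
        rw [Metric.mem_closedBall, dist_zero_right]
        rw [Matrix.norm_le_iff (by norm_num : (0:ℝ) ≤ 1)]
        intro i j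
        exact aux_entry_bound _ (hPisym k) (hPiidem k) i j
      obtain ⟨PL, _, ψ₁, hψ₁, hPLt⟩ := tendsto_subseq_of_bounded
        Metric.isBounded_closedBall hPiball
      have hQnorm : ∀ k, ‖Q k‖ = 1 := by
        intro k
        rw [hQ_def]
        simp only [norm_smul, norm_inv, Real.norm_eq_abs, abs_of_pos (hc_pos k)]
        exact inv_mul_cancel₀ (ne_of_gt (hc_pos k))
      have hQball : ∀ k, Q (ψ₁ k) ∈ Metric.closedBall (0 : Matrix (Fin n) (Fin m) ℝ) 1 := by
        intro k
        rw [Metric.mem_closedBall, dist_zero_right, hQnorm]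
      obtain ⟨Ql, _, ψ₂, hψ₂, hQt⟩ := tendsto_subseq_of_bounded
        Metric.isBounded_closedBall hQball
      set φ : ℕ → ℕ := ψ₁ ∘ ψ₂ with hφ_def
      have hφ : StrictMono φ := hψ₁.comp hψ₂
      have hφtop : Tendsto φ atTop atTop := hφ.tendsto_atTop
      -- limits along φ
      have hAφ : Tendsto (fun k => A (xs (φ k))) atTop (nhds (A x₀)) :=
        hAseq.comp hφtop
      have hPLf : Tendsto (fun k => Pi' (φ k)) atTop (nhds PL) := hPLt.comp hψ₂.tendsto_atTop
      have hQφ : Tendsto (fun k => Q (φ k)) atTop (nhds Ql) := hQt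
      have hctop : Tendsto (fun k => c (φ k)) atTop atTop := by
        apply tendsto_atTop_mono (fun k => ?_) (tendsto_natCast_atTop_atTop (R := ℝ))
        have h1 : (k : ℝ) + 1 ≤ (φ k : ℝ) + 1 := by
          have : k ≤ φ k := hφ.le_apply
          exact_mod_cast add_le_add_left (Nat.cast_le.mpr this) 1
        linarith [hnorm (φ k)]
      have hcinv : Tendsto (fun k => (c (φ k))⁻¹) atTop (nhds 0) :=
        tendsto_inv_atTop_zero.comp hctop
      -- Q A Q → 0
      have hQAQ : Ql * A x₀ * Ql = 0 := by
        have hlhs : Tendsto (fun k => Q (φ k) * A (xs (φ k)) * Q (φ k)) atTop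
            (nhds (Ql * A x₀ * Ql)) := aux_tendsto_matmul (aux_tendsto_matmul hQφ hAφ) hQφ
        have heq : ∀ k, Q (φ k) * A (xs (φ k)) * Q (φ k) = (c (φ k))⁻¹ • Q (φ k) := by
          intro k
          simp only [hQ_def]
          rw [Matrix.smul_mul, Matrix.mul_smul, Matrix.smul_mul, Matrix.mul_assoc,
            ← Matrix.mul_assoc (P (xs (φ k))), (hP (xs (φ k))).2.1]
        have hrhs : Tendsto (fun k => (c (φ k))⁻¹ • Q (φ k)) atTop (nhds ((0:ℝ) • Ql)) :=
          hcinv.smul hQφ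
        rw [zero_smul] at hrhs
        exact tendsto_nhds_unique (hlhs.congr heq) hrhs
      -- A Q symmetric
      have hAQsym : (A x₀ * Ql)ᵀ = A x₀ * Ql := by
        have h1 : Tendsto (fun k => (A (xs (φ k)) * Q (φ k))ᵀ) atTop (nhds ((A x₀ * Ql)ᵀ)) :=
          aux_tendsto_transpose (aux_tendsto_matmul hAφ hQφ)
        have heq : ∀ k, (A (xs (φ k)) * Q (φ k))ᵀ = A (xs (φ k)) * Q (φ k) := by
          intro k
          simp only [hQ_def, Matrix.mul_smul, Matrix.transpose_smul]
          rw [(hP (xs (φ k))).2.2.1]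
        have h2 : Tendsto (fun k => (A (xs (φ k)) * Q (φ k))ᵀ) atTop (nhds (A x₀ * Ql)) :=
          (aux_tendsto_matmul hAφ hQφ).congr (fun k => (heq k).symm)
        exact tendsto_nhds_unique h1 h2
      -- A₀ Q = 0
      have hAQ : A x₀ * Ql = 0 := by
        apply aux_sym_sq_zero
        rw [hAQsym]
        calc (A x₀ * Ql) * (A x₀ * Ql) = A x₀ * (Ql * A x₀ * Ql) := by
              simp only [Matrix.mul_assoc]
        _ = 0 := by rw [hQAQ, Matrix.mul_zero]
      -- norm of Ql is 1
      have hQlnorm : ‖Ql‖ = 1 := by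
        have h1 : Tendsto (fun k => ‖Q (φ k)‖) atTop (nhds ‖Ql‖) := hQφ.norm
        have h2 : Tendsto (fun k => ‖Q (φ k)‖) atTop (nhds 1) := by
          simp only [hQnorm]
          exact tendsto_const_nhds
        exact tendsto_nhds_unique h1 h2
      -- PL properties
      have hPLsym : PLᵀ = PL := by
        have h1 : Tendsto (fun k => (Pi' (φ k))ᵀ) atTop (nhds PLᵀ) :=
          aux_tendsto_transpose hPLf
        have h2 : Tendsto (fun k => (Pi' (φ k))ᵀ) atTop (nhds PL) :=
          hPLf.congr (fun k => (hPisym (φ k)).symm)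
        exact tendsto_nhds_unique h1 h2
      have hPLidem : PL * PL = PL := by
        have h1 : Tendsto (fun k => Pi' (φ k) * Pi' (φ k)) atTop (nhds (PL * PL)) :=
          aux_tendsto_matmul hPLf hPLf
        have h2 : Tendsto (fun k => Pi' (φ k) * Pi' (φ k)) atTop (nhds PL) :=
          hPLf.congr (fun k => (hPiidem (φ k)).symm)
        exact tendsto_nhds_unique h1 h2
      -- trace PL = r
      have hPLrank : PL.rank = (A x₀).rank := by
        have htr : ∀ k, (Pi' k).trace = ((A x₀).rank : ℝ) := by
          intro k
          rw [aux_trace_eq_rank_of_idem _ (hPiidem k), hPi_def]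
          rw [aux_rank_PA _ _ (hP (xs k)).1, hrank k]
        have h1 : Tendsto (fun k => (Pi' (φ k)).trace) atTop (nhds PL.trace) :=
          aux_tendsto_trace hPLf
        have h2 : Tendsto (fun k => (Pi' (φ k)).trace) atTop (nhds ((A x₀).rank : ℝ)) := by
          simp only [fun k => htr (φ k)]
          exact tendsto_const_nhds
        have h3 : PL.trace = ((A x₀).rank : ℝ) := tendsto_nhds_unique h1 h2
        have h4 := aux_trace_eq_rank_of_idem PL hPLidem
        rw [h4] at h3
        exact_mod_cast h3
      -- A₀ PL = A₀
      have hAPL : A x₀ * PL = A x₀ := by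
        have h1 : Tendsto (fun k => A (xs (φ k)) * Pi' (φ k)) atTop (nhds (A x₀ * PL)) :=
          aux_tendsto_matmul hAφ hPLf
        have heq : ∀ k, A (xs (φ k)) * Pi' (φ k) = A (xs (φ k)) := by
          intro k
          show A (xs (φ k)) * (P (xs (φ k)) * A (xs (φ k))) = A (xs (φ k))
          rw [← Matrix.mul_assoc, (hP (xs (φ k))).1]
        have h2 : Tendsto (fun k => A (xs (φ k)) * Pi' (φ k)) atTop (nhds (A x₀)) :=
          hAφ.congr (fun k => (heq k).symm)
        exact tendsto_nhds_unique h1 h2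
      -- PL Ql = Ql
      have hPLQ : PL * Ql = Ql := by
        have h1 : Tendsto (fun k => Pi' (φ k) * Q (φ k)) atTop (nhds (PL * Ql)) :=
          aux_tendsto_matmul hPLf hQφ
        have heq : ∀ k, Pi' (φ k) * Q (φ k) = Q (φ k) := by
          intro k
          show (P (xs (φ k)) * A (xs (φ k))) * ((c (φ k))⁻¹ • P (xs (φ k))) = Q (φ k)
          rw [Matrix.mul_smul, (hP (xs (φ k))).2.1]
        have h2 : Tendsto (fun k => Pi' (φ k) * Q (φ k)) atTop (nhds Ql) :=
          hQφ.congr (fun k => (heq k).symm)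
        exact tendsto_nhds_unique h1 h2
      -- kernels
      have hkerle : LinearMap.ker PL.mulVecLin ≤ LinearMap.ker (A x₀).mulVecLin := by
        intro v hv
        rw [LinearMap.mem_ker] at hv ⊢
        rw [Matrix.mulVecLin_apply] at hv ⊢
        rw [← hAPL, ← Matrix.mulVec_mulVec, hv, Matrix.mulVec_zero]
      have hkereq : LinearMap.ker PL.mulVecLin = LinearMap.ker (A x₀).mulVecLin := by
        apply Submodule.eq_of_le_of_finrank_eq hkerle
        have h1 := LinearMap.finrank_range_add_finrank_ker PL.mulVecLin
        have h2 := LinearMap.finrank_range_add_finrank_ker (A x₀).mulVecLin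
        have hPLr : Module.finrank ℝ (LinearMap.range PL.mulVecLin) = (A x₀).rank := hPLrank
        have hAr : Module.finrank ℝ (LinearMap.range (A x₀).mulVecLin) = (A x₀).rank := rfl
        omega
      -- PL * Ql = 0
      have hPLQ0 : PL * Ql = 0 := by
        have hmv : ∀ v, (PL * Ql).mulVecLin v = 0 := by
          intro v
          rw [Matrix.mulVecLin_apply, ← Matrix.mulVec_mulVec]
          have hmem : Ql.mulVec v ∈ LinearMap.ker (A x₀).mulVecLin := by
            rw [LinearMap.mem_ker, Matrix.mulVecLin_apply, Matrix.mulVec_mulVec, hAQ,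
              Matrix.zero_mulVec]
          rw [← hkereq] at hmem
          rw [LinearMap.mem_ker, Matrix.mulVecLin_apply] at hmem
          exact hmem
        have : (PL * Ql).mulVecLin = 0 := LinearMap.ext (fun v => hmv v)
        have h2 : Matrix.toLin' (PL * Ql) = Matrix.toLin' (0 : Matrix (Fin n) (Fin m) ℝ) := by
          rw [Matrix.toLin'_apply', Matrix.toLin'_apply', this, Matrix.mulVecLin_zero]
        exact Matrix.toLin'.injective h2
      rw [hPLQ] at hPLQ0
      rw [hPLQ0, norm_zero] at hQlnorm
      norm_num at hQlnorm
    -- Step 2: convergence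
    obtain ⟨C, hC⟩ := hbdd
    rw [ContinuousAt]
    apply tendsto_of_subseq_tendsto
    intro ns hns
    have hb' : ∀ᶠ k in atTop, ‖P (ns k)‖ ≤ C := hns.eventually hC
    have hfreq : ∃ᶠ k in atTop, P (ns k) ∈ Metric.closedBall (0 : Matrix (Fin n) (Fin m) ℝ) C := by
      apply hb'.frequently.mono
      intro k hk
      rwa [Metric.mem_closedBall, dist_zero_right]
    obtain ⟨Q, _, φ, hφ, hQt⟩ := tendsto_subseq_of_frequently_bounded
      Metric.isBounded_closedBall hfreq
    refine ⟨φ, ?_⟩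
    have hAn : Tendsto (fun k => A (ns (φ k))) atTop (nhds (A x₀)) :=
      Filter.Tendsto.comp hA (hns.comp hφ.tendsto_atTop)
    have hQt' : Tendsto (fun k => P (ns (φ k))) atTop (nhds Q) := hQt
    have h1 : A x₀ * Q * A x₀ = A x₀ := by
      refine tendsto_nhds_unique (aux_tendsto_matmul (aux_tendsto_matmul hAn hQt') hAn) ?_
      exact hAn.congr (fun k => ((hP (ns (φ k))).1).symm)
    have h2 : Q * A x₀ * Q = Q := by
      refine tendsto_nhds_unique (aux_tendsto_matmul (aux_tendsto_matmul hQt' hAn) hQt') ?_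
      exact hQt'.congr (fun k => ((hP (ns (φ k))).2.1).symm)
    have h3 : (A x₀ * Q)ᵀ = A x₀ * Q := by
      refine tendsto_nhds_unique (aux_tendsto_transpose (aux_tendsto_matmul hAn hQt')) ?_
      exact (aux_tendsto_matmul hAn hQt').congr (fun k => ((hP (ns (φ k))).2.2.1).symm)
    have h4 : (Q * A x₀)ᵀ = Q * A x₀ := by
      refine tendsto_nhds_unique (aux_tendsto_transpose (aux_tendsto_matmul hQt' hAn)) ?_
      exact (aux_tendsto_matmul hQt' hAn).congr (fun k => ((hP (ns (φ k))).2.2.2).symm)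
    obtain ⟨g1, g2, g3, g4⟩ := hP x₀
    have : P x₀ = Q := aux_pinv_unique (A x₀) (P x₀) Q g1 g2 g3 g4 h1 h2 h3 h4
    rw [this]
    exact hQt'
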